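/- For every positive integer n, M(2n) ≥ 2·M(n)^2. -/

import Mathlib

/-- A finite sequence (list) of naturals contains a 3-term arithmetic progression
as a subsequence: there are indices `i < j < k` with `a i + a k = 2 * a j`,
equivalently some sublist `[x, y, z]` with `x + z = 2 * y`. -/
def Has3AP (l : List ℕ) : Prop :=
  ∃ x y z : ℕ, [x, y, z].Sublist l ∧ x + z = 2 * y

/-- `M n` is the number of 3AP-free permutations of `{1, 2, ..., n}`. -/
noncomputable def M (n : ℕ) : ℕ :=
  Nat.card {l : List ℕ // l.Perm (List.range' 1 n) ∧ ¬ Has3AP l}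

lemma mem_range1 {x m : ℕ} : x ∈ List.range' 1 m ↔ 1 ≤ x ∧ x ≤ m := by
  rw [List.mem_range']
  constructor
  · rintro ⟨i, hi, rfl⟩; omega
  · rintro ⟨h1, h2⟩; exact ⟨x - 1, by omega, by omega⟩

lemma eInj : Function.Injective (fun p : ℕ => 2 * p) := by
  intro p q h; simpa using h

lemma oInj : Function.Injective (fun p : ℕ => 2 * p - 1) := by
  intro p q h; simp only at h; omega

lemma sublist_map_three {f : ℕ → ℕ} {l : List ℕ} {x y z : ℕ}
    (h : [x, y, z].Sublist (l.map f)) :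
    ∃ p q r, [p, q, r].Sublist l ∧ x = f p ∧ y = f q ∧ z = f r := by
  rw [List.sublist_map_iff] at h
  obtain ⟨l', hs, he⟩ := h
  rcases l' with _ | ⟨p, _ | ⟨q, _ | ⟨r, _ | ⟨s, t⟩⟩⟩⟩ <;> simp_all
  exact ⟨p, q, r, hs, rfl, rfl, rfl⟩

lemma noAP_eo {a b : List ℕ} (ha1 : ∀ x ∈ a, 1 ≤ x) (hb1 : ∀ x ∈ b, 1 ≤ x)
    (ha : ¬ Has3AP a) (hb : ¬ Has3AP b) :
    ¬ Has3AP (a.map (fun p => 2 * p) ++ b.map (fun p => 2 * p - 1)) := by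
  rintro ⟨x, y, z, hs, hsum⟩
  rw [List.sublist_append_iff] at hs
  obtain ⟨l₁, l₂, hxyz, h1, h2⟩ := hs
  rcases l₁ with _ | ⟨u, _ | ⟨v, _ | ⟨w, l₁⟩⟩⟩
  · simp only [List.nil_append] at hxyz
    subst hxyz
    obtain ⟨p, q, r, hpqr, hx, hy, hz⟩ := sublist_map_three h2
    have hp := hb1 p (hpqr.subset (by simp))
    have hq := hb1 q (hpqr.subset (by simp))
    have hr := hb1 r (hpqr.subset (by simp))
    exact hb ⟨p, q, r, hpqr, by omega⟩
  · simp only [List.cons_append, List.nil_append, List.cons.injEq] at hxyz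
    obtain ⟨rfl, hl⟩ := hxyz
    subst hl
    obtain ⟨p, hpmem, hpe⟩ := List.mem_map.1 (h1.subset (List.mem_singleton_self x))
    obtain ⟨q, hqmem, hqe⟩ := List.mem_map.1 (h2.subset (List.mem_cons_self))
    obtain ⟨r, hrmem, hre⟩ := List.mem_map.1
      (h2.subset (List.mem_cons_of_mem y (List.mem_singleton_self z)))
    have hq := hb1 q hqmem
    have hr := hb1 r hrmem
    omega
  · simp only [List.cons_append, List.nil_append, List.cons.injEq] at hxyz
    obtain ⟨rfl, rfl, hl⟩ := hxyz
    subst hl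
    obtain ⟨p, hpmem, hpe⟩ := List.mem_map.1 (h1.subset (List.mem_cons_self))
    obtain ⟨q, hqmem, hqe⟩ := List.mem_map.1
      (h1.subset (List.mem_cons_of_mem x (List.mem_singleton_self y)))
    obtain ⟨r, hrmem, hre⟩ := List.mem_map.1 (h2.subset (List.mem_singleton_self z))
    have hr := hb1 r hrmem
    omega
  · simp only [List.cons_append, List.nil_append, List.cons.injEq] at hxyz
    obtain ⟨rfl, rfl, rfl, hl⟩ := hxyz
    have hnil : l₁ = [] := by
      cases l₁ with
      | nil => rfl
      | cons s t => simp at hl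
    subst hnil
    obtain ⟨p, q, r, hpqr, hx, hy, hz⟩ := sublist_map_three h1
    exact ha ⟨p, q, r, hpqr, by omega⟩

lemma noAP_oe {a b : List ℕ} (ha1 : ∀ x ∈ a, 1 ≤ x) (hb1 : ∀ x ∈ b, 1 ≤ x)
    (ha : ¬ Has3AP a) (hb : ¬ Has3AP b) :
    ¬ Has3AP (a.map (fun p => 2 * p - 1) ++ b.map (fun p => 2 * p)) := by
  rintro ⟨x, y, z, hs, hsum⟩
  rw [List.sublist_append_iff] at hs
  obtain ⟨l₁, l₂, hxyz, h1, h2⟩ := hs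
  rcases l₁ with _ | ⟨u, _ | ⟨v, _ | ⟨w, l₁⟩⟩⟩
  · simp only [List.nil_append] at hxyz
    subst hxyz
    obtain ⟨p, q, r, hpqr, hx, hy, hz⟩ := sublist_map_three h2
    exact hb ⟨p, q, r, hpqr, by omega⟩
  · simp only [List.cons_append, List.nil_append, List.cons.injEq] at hxyz
    obtain ⟨rfl, hl⟩ := hxyz
    subst hl
    obtain ⟨p, hpmem, hpe⟩ := List.mem_map.1 (h1.subset (List.mem_singleton_self x))
    obtain ⟨q, hqmem, hqe⟩ := List.mem_map.1 (h2.subset (List.mem_cons_self))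
    obtain ⟨r, hrmem, hre⟩ := List.mem_map.1
      (h2.subset (List.mem_cons_of_mem y (List.mem_singleton_self z)))
    have hp := ha1 p hpmem
    omega
  · simp only [List.cons_append, List.nil_append, List.cons.injEq] at hxyz
    obtain ⟨rfl, rfl, hl⟩ := hxyz
    subst hl
    obtain ⟨p, hpmem, hpe⟩ := List.mem_map.1 (h1.subset (List.mem_cons_self))
    obtain ⟨q, hqmem, hqe⟩ := List.mem_map.1
      (h1.subset (List.mem_cons_of_mem x (List.mem_singleton_self y)))
    obtain ⟨r, hrmem, hre⟩ := List.mem_map.1 (h2.subset (List.mem_singleton_self z))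
    have hp := ha1 p hpmem
    have hq := ha1 q hqmem
    omega
  · simp only [List.cons_append, List.nil_append, List.cons.injEq] at hxyz
    obtain ⟨rfl, rfl, rfl, hl⟩ := hxyz
    have hnil : l₁ = [] := by
      cases l₁ with
      | nil => rfl
      | cons s t => simp at hl
    subst hnil
    obtain ⟨p, q, r, hpqr, hx, hy, hz⟩ := sublist_map_three h1
    have hp := ha1 p (hpqr.subset (by simp))
    have hq := ha1 q (hpqr.subset (by simp))
    have hr := ha1 r (hpqr.subset (by simp))
    exact ha ⟨p, q, r, hpqr, by omega⟩

lemma perm_eo (n : ℕ) :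
    ((List.range' 1 n).map (fun p => 2 * p) ++
      (List.range' 1 n).map (fun p => 2 * p - 1)).Perm (List.range' 1 (2 * n)) := by
  apply List.perm_of_nodup_nodup_toFinset_eq
  · apply List.Nodup.append
    · exact (List.nodup_range' ..).map eInj
    · exact (List.nodup_range' ..).map oInj
    · intro x hx hx'
      obtain ⟨p, hp, rfl⟩ := List.mem_map.1 hx
      obtain ⟨q, hq, hqe⟩ := List.mem_map.1 hx'
      have hq1 := (mem_range1.1 hq).1
      omega
  · exact List.nodup_range' ..
  · ext x
    simp only [List.mem_toFinset, List.mem_append, List.mem_map, mem_range1]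
    constructor
    · rintro (⟨p, ⟨h1, h2⟩, rfl⟩ | ⟨p, ⟨h1, h2⟩, rfl⟩) <;> omega
    · rintro ⟨h1, h2⟩
      rcases Nat.even_or_odd x with ⟨p, hp⟩ | ⟨p, hp⟩
      · exact Or.inl ⟨p, ⟨by omega, by omega⟩, by omega⟩
      · exact Or.inr ⟨p + 1, ⟨by omega, by omega⟩, by omega⟩

lemma finite_perm_subtype (L : List ℕ) (P : List ℕ → Prop) :
    Finite {l : List ℕ // l.Perm L ∧ P l} := by
  haveI := (List.finite_toSet L.permutations).to_subtype
  apply Finite.of_injective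
    (β := {x : List ℕ // x ∈ {y : List ℕ | y ∈ L.permutations}})
    (fun l => ⟨l.1, List.mem_permutations.2 l.2.1⟩)
  intro a b h
  simp only [Subtype.mk.injEq] at h
  exact Subtype.ext h

/-- For every positive integer `n`, `M (2n) ≥ 2 * M n ^ 2`. -/
theorem M_two_mul (n : ℕ) (hn : 0 < n) : 2 * (M n) ^ 2 ≤ M (2 * n) := by
  classical
  set S := {l : List ℕ // l.Perm (List.range' 1 n) ∧ ¬ Has3AP l} with hS
  set T := {l : List ℕ // l.Perm (List.range' 1 (2 * n)) ∧ ¬ Has3AP l} with hT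
  haveI : Finite S := finite_perm_subtype _ _
  haveI : Finite T := finite_perm_subtype _ _
  have hmem1 : ∀ s : S, ∀ x ∈ s.1, 1 ≤ x := by
    intro s x hx
    exact (mem_range1.1 (s.2.1.mem_iff.1 hx)).1
  have hlen : ∀ s : S, s.1.length = n := by
    intro s
    simpa using s.2.1.length_eq
  have hcons : ∀ s : S, ∃ u t, s.1 = u :: t := by
    intro s
    cases h : s.1 with
    | nil => exfalso; have := hlen s; rw [h] at this; simp at this; omega
    | cons u t => exact ⟨u, t, rfl⟩
  let F : (S × S) ⊕ (S × S) → T := fun ab =>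
    match ab with
    | .inl (a, b) =>
      ⟨a.1.map (fun p => 2 * p) ++ b.1.map (fun p => 2 * p - 1),
        ((a.2.1.map _).append (b.2.1.map _)).trans (perm_eo n),
        noAP_eo (hmem1 a) (hmem1 b) a.2.2 b.2.2⟩
    | .inr (a, b) =>
      ⟨a.1.map (fun p => 2 * p - 1) ++ b.1.map (fun p => 2 * p),
        (((a.2.1.map _).append (b.2.1.map _)).trans List.perm_append_comm).trans (perm_eo n),
        noAP_oe (hmem1 a) (hmem1 b) a.2.2 b.2.2⟩
  have Finj : Function.Injective F := by
    rintro (⟨a₁, b₁⟩ | ⟨a₁, b₁⟩) (⟨a₂, b₂⟩ | ⟨a₂, b₂⟩) h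
    · have h' : a₁.1.map (fun p => 2 * p) ++ b₁.1.map (fun p => 2 * p - 1) =
          a₂.1.map (fun p => 2 * p) ++ b₂.1.map (fun p => 2 * p - 1) :=
        congrArg Subtype.val h
      have hl : (a₁.1.map (fun p => 2 * p)).length = (a₂.1.map (fun p => 2 * p)).length := by
        simp [hlen a₁, hlen a₂]
      obtain ⟨h₁, h₂⟩ := List.append_inj h' hl
      have ha : a₁.1 = a₂.1 := List.map_injective_iff.2 eInj h₁
      have hb : b₁.1 = b₂.1 := List.map_injective_iff.2 oInj h₂
      simp only [Sum.inl.injEq, Prod.mk.injEq]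
      exact ⟨Subtype.ext ha, Subtype.ext hb⟩
    · exfalso
      have h' : a₁.1.map (fun p => 2 * p) ++ b₁.1.map (fun p => 2 * p - 1) =
          a₂.1.map (fun p => 2 * p - 1) ++ b₂.1.map (fun p => 2 * p) :=
        congrArg Subtype.val h
      obtain ⟨u, t, hu⟩ := hcons a₁
      obtain ⟨v, t', hv⟩ := hcons a₂
      rw [hu, hv] at h'
      simp only [List.map_cons, List.cons_append, List.cons.injEq] at h'
      have hv1 : 1 ≤ v := hmem1 a₂ v (by rw [hv]; simp)
      omega
    · exfalso
      have h' : a₁.1.map (fun p => 2 * p - 1) ++ b₁.1.map (fun p => 2 * p) =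
          a₂.1.map (fun p => 2 * p) ++ b₂.1.map (fun p => 2 * p - 1) :=
        congrArg Subtype.val h
      obtain ⟨u, t, hu⟩ := hcons a₁
      obtain ⟨v, t', hv⟩ := hcons a₂
      rw [hu, hv] at h'
      simp only [List.map_cons, List.cons_append, List.cons.injEq] at h'
      have hu1 : 1 ≤ u := hmem1 a₁ u (by rw [hu]; simp)
      omega
    · have h' : a₁.1.map (fun p => 2 * p - 1) ++ b₁.1.map (fun p => 2 * p) =
          a₂.1.map (fun p => 2 * p - 1) ++ b₂.1.map (fun p => 2 * p) :=
        congrArg Subtype.val h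
      have hl : (a₁.1.map (fun p => 2 * p - 1)).length =
          (a₂.1.map (fun p => 2 * p - 1)).length := by
        simp [hlen a₁, hlen a₂]
      obtain ⟨h₁, h₂⟩ := List.append_inj h' hl
      have ha : a₁.1 = a₂.1 := List.map_injective_iff.2 oInj h₁
      have hb : b₁.1 = b₂.1 := List.map_injective_iff.2 eInj h₂
      simp only [Sum.inr.injEq, Prod.mk.injEq]
      exact ⟨Subtype.ext ha, Subtype.ext hb⟩
  have key := Nat.card_le_card_of_injective F Finj
  have hcard : Nat.card ((S × S) ⊕ (S × S)) = 2 * (Nat.card S) ^ 2 := by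
    rw [Nat.card_sum, Nat.card_prod]; ring
  have hMn : M n = Nat.card S := rfl
  have hM2n : M (2 * n) = Nat.card T := rfl
  rw [hMn, hM2n, ← hcard]
  exact key
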